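/- Let K₁ > 0 and K₂ be real constants with |K₂| < K₁, and let z₀ = log(K₂/K₁ + 1). Then the origin is globally attractive for the planar system v̇ = −e^{z₀}(e^v − 1) − w, ẇ = (K₁ + K₂)(e^v − 1): for every pair of differentiable functions v, w : ℝ → ℝ satisfying these equations for all t ≥ 0, one has (v(t), w(t)) → (0, 0) as t → ∞. -/

import Mathlib

open Filter

open Set Real in
lemma aux_exists_limit_of_antitoneOn (f : ℝ → ℝ) (hf : AntitoneOn f (Set.Ici 0))
    (h0 : ∀ t ≥ (0:ℝ), 0 ≤ f t) :
    ∃ L, 0 ≤ L ∧ Tendsto f atTop (nhds L) ∧ ∀ t ≥ (0:ℝ), L ≤ f t := by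
  set g : ℝ → ℝ := fun t => f (max t 0) with hgdef
  have hg : Antitone g := fun s t hst =>
    hf (Set.mem_Ici.mpr (le_max_right _ _)) (Set.mem_Ici.mpr (le_max_right _ _)) (max_le_max hst le_rfl)
  have hgb : BddBelow (Set.range g) := ⟨0, by rintro x ⟨t, rfl⟩; exact h0 _ (le_max_right _ _)⟩
  have hgt := tendsto_atTop_ciInf hg hgb
  refine ⟨⨅ t, g t, le_ciInf fun t => h0 _ (le_max_right _ _), ?_, ?_⟩
  · refine hgt.congr' ?_
    filter_upwards [eventually_ge_atTop (0:ℝ)] with t ht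
    simp [hgdef, max_eq_left ht]
  · intro t ht
    have := ciInf_le hgb t
    simpa [hgdef, max_eq_left ht] using this

lemma aux_deriv_limit_zero (v g : ℝ → ℝ) (hv : ∀ t ≥ (0:ℝ), HasDerivAt v (g t) t)
    (hv0 : Tendsto v atTop (nhds 0)) (a : ℝ) (hg : Tendsto g atTop (nhds a)) : a = 0 := by
  have hmvt : ∀ t : ℝ, 0 ≤ t → ∃ ξ, ξ ∈ Set.Ioo t (t+1) ∧ g ξ = v (t+1) - v t := by
    intro t ht
    obtain ⟨ξ, hξ, he⟩ := exists_hasDerivAt_eq_slope v g (by linarith : t < t + 1)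
      (fun x hx => (hv x (le_trans ht hx.1)).continuousAt.continuousWithinAt)
      (fun x hx => hv x (le_trans ht (le_of_lt hx.1)))
    refine ⟨ξ, hξ, ?_⟩
    simpa using he
  set F : ℝ → ℝ := fun t => if h : 0 ≤ t then (hmvt t h).choose else 0 with hFdef
  have hF : ∀ t : ℝ, 0 ≤ t → F t ∈ Set.Ioo t (t+1) ∧ g (F t) = v (t+1) - v t := by
    intro t ht
    simp only [hFdef, dif_pos ht]
    exact (hmvt t ht).choose_spec
  have htend : Tendsto F atTop atTop := by
    apply tendsto_atTop_mono' atTop ?_ tendsto_id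
    filter_upwards [eventually_ge_atTop (0:ℝ)] with t ht
    exact le_of_lt (hF t ht).1.1
  have h1 : Tendsto (fun t => g (F t)) atTop (nhds a) := hg.comp htend
  have h2 : Tendsto (fun t => v (t+1) - v t) atTop (nhds 0) := by
    have := (hv0.comp (tendsto_atTop_add_const_right atTop 1 tendsto_id)).sub hv0
    simpa using this
  have heq : (fun t => g (F t)) =ᶠ[atTop] fun t => v (t+1) - v t := by
    filter_upwards [eventually_ge_atTop (0:ℝ)] with t ht
    exact (hF t ht).2
  exact tendsto_nhds_unique (h1.congr' heq) h2

open Set Real in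
set_option maxHeartbeats 1000000 in
lemma aux_main (c K : ℝ) (hc : 0 < c) (hK : 0 < K) (v w : ℝ → ℝ)
    (hv : ∀ t ≥ (0:ℝ), HasDerivAt v (-c * (Real.exp (v t) - 1) - w t) t)
    (hw : ∀ t ≥ (0:ℝ), HasDerivAt w (K * (Real.exp (v t) - 1)) t) :
    Tendsto v atTop (nhds 0) ∧ Tendsto w atTop (nhds 0) := by
  obtain ⟨f, hfdef⟩ : ∃ f : ℝ → ℝ, f = fun t => (Real.exp (v t) - 1)^2 := ⟨_, rfl⟩
  obtain ⟨V, hVdef⟩ : ∃ V : ℝ → ℝ,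
      V = fun t => K * (Real.exp (v t) - v t - 1) + (w t)^2/2 := ⟨_, rfl⟩
  have hV : ∀ t ≥ (0:ℝ), HasDerivAt V (-(c*K) * f t) t := by
    intro t ht
    have h1 := hv t ht
    have h2 := hw t ht
    have h3 := h1.exp
    have h4 := h2.pow 2
    have h5 := (((h3.sub h1).sub_const 1).const_mul K).add (h4.div_const 2)
    rw [hVdef, hfdef]
    refine h5.congr_deriv ?_
    norm_num
    ring
  have hfnn : ∀ t, 0 ≤ f t := by intro t; rw [hfdef]; positivity
  have hVcont : ContinuousOn V (Set.Ici 0) :=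
    fun t ht => (hV t ht).continuousAt.continuousWithinAt
  have hVanti : AntitoneOn V (Set.Ici 0) := by
    apply antitoneOn_of_deriv_nonpos (convex_Ici 0) hVcont
    · intro t ht
      rw [interior_Ici] at ht
      exact ((hV t (le_of_lt ht)).differentiableAt).differentiableWithinAt
    · intro t ht
      rw [interior_Ici] at ht
      rw [(hV t ht.le).deriv]
      have := hfnn t
      nlinarith [mul_pos hc hK]
  have hV0 : ∀ t ≥ (0:ℝ), 0 ≤ V t := by
    intro t ht
    have := Real.add_one_le_exp (v t)
    rw [hVdef]
    nlinarith [sq_nonneg (w t)]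
  obtain ⟨L, hL0, hVL, hLle⟩ := aux_exists_limit_of_antitoneOn V hVanti hV0
  obtain ⟨B, hBdef⟩ : ∃ B : ℝ, B = V 0 := ⟨_, rfl⟩
  have hB0 : 0 ≤ B := hBdef ▸ hV0 0 le_rfl
  have hVB : ∀ t ≥ (0:ℝ), V t ≤ B := fun t ht => hBdef ▸ hVanti self_mem_Ici ht ht
  have hterm : ∀ t ≥ (0:ℝ), Real.exp (v t) - v t - 1 ≤ B / K ∧ (w t)^2 ≤ 2*B := by
    intro t ht
    have h1 := hVB t ht
    have h2 := Real.add_one_le_exp (v t)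
    rw [hVdef] at h1
    simp only at h1
    constructor
    · rw [le_div_iff₀ hK]
      nlinarith [sq_nonneg (w t)]
    · nlinarith
  have hvup : ∀ t ≥ (0:ℝ), v t ≤ 2 * Real.sqrt (B/K) := by
    intro t ht
    rcases le_or_gt (v t) 0 with h | h
    · nlinarith [Real.sqrt_nonneg (B/K)]
    · have h1 : v t / 2 + 1 ≤ Real.exp (v t / 2) := Real.add_one_le_exp _
      have h2 : Real.exp (v t) = Real.exp (v t/2) * Real.exp (v t/2) := by
        rw [← Real.exp_add]; ring_nf
      have h3 := (hterm t ht).1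
      have h4 : (v t)^2 / 4 ≤ B / K := by nlinarith
      have h5 := Real.sq_sqrt (show (0:ℝ) ≤ B/K from div_nonneg hB0 hK.le)
      nlinarith [Real.sqrt_nonneg (B/K)]
  obtain ⟨E, hEdef⟩ : ∃ E : ℝ, E = Real.exp (2 * Real.sqrt (B/K)) := ⟨_, rfl⟩
  have hEpos : (0:ℝ) < E := hEdef ▸ Real.exp_pos _
  have hE : ∀ t ≥ (0:ℝ), Real.exp (v t) ≤ E :=
    fun t ht => hEdef ▸ Real.exp_le_exp.mpr (hvup t ht)
  obtain ⟨W, hWdef⟩ : ∃ W : ℝ, W = Real.sqrt (2*B) := ⟨_, rfl⟩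
  have hW0 : 0 ≤ W := hWdef ▸ Real.sqrt_nonneg _
  have hWb : ∀ t ≥ (0:ℝ), |w t| ≤ W := by
    intro t ht
    rw [hWdef, ← Real.sqrt_sq_eq_abs]
    exact Real.sqrt_le_sqrt (hterm t ht).2
  have hf : ∀ t ≥ (0:ℝ), HasDerivAt f
      (2*(Real.exp (v t)-1) * Real.exp (v t) * (-c*(Real.exp (v t)-1) - w t)) t := by
    intro t ht
    have := ((hv t ht).exp.sub_const 1).pow 2
    rw [hfdef]
    refine this.congr_deriv ?_
    norm_num
    ring
  obtain ⟨M₂, hM2def⟩ : ∃ M₂ : ℝ, M₂ = 2*(E+1)*E*(c*(E+1)+W) := ⟨_, rfl⟩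
  have hM2pos : 0 < M₂ := by rw [hM2def]; positivity
  have hfb : ∀ t ≥ (0:ℝ),
      |2*(Real.exp (v t)-1) * Real.exp (v t) * (-c*(Real.exp (v t)-1) - w t)| ≤ M₂ := by
    intro t ht
    have he1 : |Real.exp (v t) - 1| ≤ E + 1 := by
      rw [abs_le]; constructor <;> nlinarith [Real.exp_pos (v t), hE t ht]
    have hd : |(-c*(Real.exp (v t)-1) - w t)| ≤ c*(E+1) + W := by
      calc |(-c*(Real.exp (v t)-1) - w t)| ≤ |(-c*(Real.exp (v t)-1))| + |w t| :=
            abs_sub _ _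
        _ ≤ c*(E+1) + W := by
            rw [abs_mul, abs_neg, abs_of_pos hc]
            exact add_le_add (by nlinarith [abs_nonneg (Real.exp (v t) - 1)]) (hWb t ht)
    calc |2*(Real.exp (v t)-1) * Real.exp (v t) * (-c*(Real.exp (v t)-1) - w t)|
        = 2 * |Real.exp (v t)-1| * Real.exp (v t) * |(-c*(Real.exp (v t)-1) - w t)| := by
          rw [abs_mul, abs_mul, abs_mul, abs_two, abs_of_pos (Real.exp_pos _)]
      _ ≤ 2*(E+1)*E*(c*(E+1)+W) := by
          have i1 : 2*|Real.exp (v t)-1| ≤ 2*(E+1) := by linarith [he1]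
          have i2 : 2*|Real.exp (v t)-1| * Real.exp (v t) ≤ 2*(E+1)*E :=
            mul_le_mul i1 (hE t ht) (Real.exp_pos _).le (by linarith)
          exact mul_le_mul i2 hd (abs_nonneg _) (by nlinarith)
      _ = M₂ := hM2def.symm
  have hflip : ∀ t₀ ≥ (0:ℝ), ∀ ξ, t₀ ≤ ξ → f t₀ - f ξ ≤ M₂ * (ξ - t₀) := by
    intro t₀ ht₀ ξ hξ
    rcases eq_or_lt_of_le hξ with rfl | hlt
    · simp
    · obtain ⟨η, hη, heq⟩ := exists_hasDerivAt_eq_slope f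
        (fun s => 2*(Real.exp (v s)-1) * Real.exp (v s) * (-c*(Real.exp (v s)-1) - w s)) hlt
        (fun x hx => (hf x (le_trans ht₀ hx.1)).continuousAt.continuousWithinAt)
        (fun x hx => hf x (le_trans ht₀ (le_of_lt hx.1)))
      rw [eq_div_iff (by linarith : ξ - t₀ ≠ 0)] at heq
      have hb := (abs_le.mp (hfb η (le_trans ht₀ (le_of_lt hη.1)))).1
      have hmul := mul_le_mul_of_nonneg_right hb (by linarith : (0:ℝ) ≤ ξ - t₀)
      linarith [heq, hmul]
  have hf0 : Tendsto f atTop (nhds 0) := by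
    rw [Metric.tendsto_atTop]
    intro ε hε
    obtain ⟨δ, hδdef⟩ : ∃ δ : ℝ, δ = min (ε/(2*M₂)) 1 := ⟨_, rfl⟩
    have hδpos : 0 < δ := hδdef ▸ lt_min (by positivity) one_pos
    have hδle : M₂ * δ ≤ ε/2 := by
      rw [hδdef]
      calc M₂ * min (ε/(2*M₂)) 1 ≤ M₂ * (ε/(2*M₂)) :=
            mul_le_mul_of_nonneg_left (min_le_left _ _) hM2pos.le
        _ = ε/2 := by field_simp
    obtain ⟨d, hddef⟩ : ∃ d : ℝ, d = c*K*(ε/2)*δ := ⟨_, rfl⟩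
    have hdpos : 0 < d := by rw [hddef]; positivity
    obtain ⟨T, hT⟩ := (Metric.tendsto_atTop.mp hVL) d hdpos
    refine ⟨max T 0, fun t ht => ?_⟩
    have ht0 : (0:ℝ) ≤ t := le_trans (le_max_right T 0) ht
    have htT : T ≤ t := le_trans (le_max_left T 0) ht
    rw [Real.dist_eq, sub_zero, abs_of_nonneg (hfnn t)]
    by_contra hcon
    push_neg at hcon
    obtain ⟨η, hη, heq⟩ := exists_hasDerivAt_eq_slope V (fun s => -(c*K) * f s)
      (by linarith : t < t + δ)
      (fun x hx => (hV x (le_trans ht0 hx.1)).continuousAt.continuousWithinAt)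
      (fun x hx => hV x (le_trans ht0 (le_of_lt hx.1)))
    rw [eq_div_iff (by linarith : t + δ - t ≠ 0)] at heq
    have hηf : ε/2 ≤ f η := by
      have h1 := hflip t ht0 η hη.1.le
      have hηd : η - t ≤ δ := by linarith [hη.2]
      have h2 : M₂ * (η - t) ≤ M₂ * δ := mul_le_mul_of_nonneg_left hηd hM2pos.le
      linarith
    have hdrop : V (t + δ) - V t ≤ -d := by
      have hmul : (f η - ε/2) * (c*K*δ) ≥ 0 :=
        mul_nonneg (by linarith) (by positivity)
      have heq2 : -(c*K) * f η * (t + δ - t) = V (t+δ) - V t := heq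
      rw [hddef]
      nlinarith [heq2, hmul]
    have h2 := hT t htT
    rw [Real.dist_eq, abs_lt] at h2
    have h3 := hLle (t + δ) (by linarith)
    linarith [hdrop, h2.2, h3]
  have habs1 : Tendsto (fun t => |Real.exp (v t) - 1|) atTop (nhds 0) := by
    have h := (Real.continuous_sqrt.tendsto 0).comp hf0
    have heq : (fun t => Real.sqrt (f t)) = fun t => |Real.exp (v t) - 1| := by
      funext t; rw [hfdef]; exact Real.sqrt_sq_eq_abs _
    rw [show (Real.sqrt ∘ f) = fun t => Real.sqrt (f t) from rfl, heq] at h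
    simpa using h
  have he1 : Tendsto (fun t => Real.exp (v t)) atTop (nhds 1) := by
    have h : Tendsto (fun t => Real.exp (v t) - 1) atTop (nhds 0) := by
      rw [tendsto_zero_iff_abs_tendsto_zero]
      exact habs1
    have := h.add_const 1
    simpa using this
  have hv0 : Tendsto v atTop (nhds 0) := by
    have hlog := ((Real.continuousAt_log one_ne_zero).tendsto).comp he1
    simp only [Function.comp_def, Real.log_exp, Real.log_one] at hlog
    exact hlog
  have hterm0 : Tendsto (fun t => K * (Real.exp (v t) - v t - 1)) atTop (nhds 0) := by
    have h := ((he1.sub hv0).sub_const 1).const_mul K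
    simpa using h
  have hw2 : Tendsto (fun t => (w t)^2) atTop (nhds (2*L)) := by
    have h := (hVL.sub hterm0).const_mul 2
    have heq : (fun t => 2 * (V t - K * (Real.exp (v t) - v t - 1))) = fun t => (w t)^2 := by
      funext t; rw [hVdef]; ring
    rw [heq] at h
    simpa using h
  have hLzero : L = 0 := by
    by_contra hL
    have hLpos : 0 < L := lt_of_le_of_ne hL0 (Ne.symm hL)
    obtain ⟨a, hadef⟩ : ∃ a : ℝ, a = Real.sqrt (2*L) := ⟨_, rfl⟩
    have hapos : 0 < a := hadef ▸ Real.sqrt_pos.mpr (by linarith)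
    have habsw : Tendsto (fun t => |w t|) atTop (nhds a) := by
      have h := (Real.continuous_sqrt.tendsto (2*L)).comp hw2
      have heq : (fun t => Real.sqrt ((w t)^2)) = fun t => |w t| := by
        funext t; exact Real.sqrt_sq_eq_abs _
      rw [show (Real.sqrt ∘ fun t => (w t)^2) = fun t => Real.sqrt ((w t)^2) from rfl, heq] at h
      rw [hadef]
      exact h
    have hev : ∀ᶠ t in atTop, a/2 < |w t| :=
      habsw.eventually (eventually_gt_nhds (by linarith))
    obtain ⟨T, hT⟩ := eventually_atTop.mp (hev.and (eventually_ge_atTop 0))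
    have hwc : ∀ t : ℝ, ContinuousOn w (Icc T t) :=
      fun t x hx => (hw x (le_trans (hT T le_rfl).2 hx.1)).continuousAt.continuousWithinAt
    have hsign : (∀ t ≥ T, 0 < w t) ∨ (∀ t ≥ T, w t < 0) := by
      rcases lt_trichotomy (w T) 0 with h | h | h
      · right; intro t ht
        by_contra hcon
        push_neg at hcon
        obtain ⟨s, hs, hws⟩ := intermediate_value_Icc ht (hwc t)
          (⟨h.le, hcon⟩ : (0:ℝ) ∈ Icc (w T) (w t))
        have hws2 := (hT s hs.1).1
        rw [hws] at hws2
        simp only [abs_zero] at hws2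
        linarith
      · exfalso
        have h2 := (hT T le_rfl).1
        rw [h] at h2
        simp only [abs_zero] at h2
        linarith
      · left; intro t ht
        by_contra hcon
        push_neg at hcon
        obtain ⟨s, hs, hws⟩ := intermediate_value_Icc' ht (hwc t)
          (⟨hcon, h.le⟩ : (0:ℝ) ∈ Icc (w t) (w T))
        have hws2 := (hT s hs.1).1
        rw [hws] at hws2
        simp only [abs_zero] at hws2
        linarith
    have hwlim : Tendsto w atTop (nhds a) ∨ Tendsto w atTop (nhds (-a)) := by
      rcases hsign with h | h
      · left
        refine habsw.congr' ?_
        filter_upwards [eventually_ge_atTop T] with t ht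
        exact abs_of_pos (h t ht)
      · right
        have hn := habsw.neg
        refine hn.congr' ?_
        filter_upwards [eventually_ge_atTop T] with t ht
        rw [abs_of_neg (h t ht)]; ring
    rcases hwlim with h | h
    · have hg : Tendsto (fun t => -c * (Real.exp (v t) - 1) - w t) atTop (nhds (-a)) := by
        have := ((he1.sub_const 1).const_mul (-c)).sub h
        simpa using this
      have := aux_deriv_limit_zero v _ hv hv0 (-a) hg
      linarith
    · have hg : Tendsto (fun t => -c * (Real.exp (v t) - 1) - w t) atTop (nhds a) := by
        have := ((he1.sub_const 1).const_mul (-c)).sub h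
        simpa using this
      have := aux_deriv_limit_zero v _ hv hv0 a hg
      linarith
  have hw0 : Tendsto w atTop (nhds 0) := by
    rw [hLzero] at hw2
    simp only [mul_zero] at hw2
    have habsw : Tendsto (fun t => |w t|) atTop (nhds 0) := by
      have h := (Real.continuous_sqrt.tendsto 0).comp hw2
      have heq : (fun t => Real.sqrt ((w t)^2)) = fun t => |w t| := by
        funext t; exact Real.sqrt_sq_eq_abs _
      rw [show (Real.sqrt ∘ fun t => (w t)^2) = fun t => Real.sqrt ((w t)^2) from rfl, heq] at h
      simpa using h
    rw [tendsto_zero_iff_abs_tendsto_zero]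
    exact habsw
  exact ⟨hv0, hw0⟩

/-- The origin is globally attractive for the shifted network-level
dynamics. -/
theorem origin_globally_attractive (K₁ K₂ : ℝ) (hK₁ : 0 < K₁) (hK₂ : |K₂| < K₁)
    (z₀ : ℝ) (hz₀ : z₀ = Real.log (K₂ / K₁ + 1)) :
    ∀ v w : ℝ → ℝ,
      (∀ t ≥ (0 : ℝ), HasDerivAt v (-Real.exp z₀ * (Real.exp (v t) - 1) - w t) t) →
      (∀ t ≥ (0 : ℝ), HasDerivAt w ((K₁ + K₂) * (Real.exp (v t) - 1)) t) →
      Tendsto (fun t => (v t, w t)) atTop (nhds ((0 : ℝ), (0 : ℝ))) := by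
  intro v w hv hw
  have hc : 0 < Real.exp z₀ := Real.exp_pos _
  have hK : 0 < K₁ + K₂ := by
    have := (abs_lt.mp hK₂).1
    linarith
  obtain ⟨h1, h2⟩ := aux_main (Real.exp z₀) (K₁ + K₂) hc hK v w hv hw
  exact h1.prodMk_nhds h2
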